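/- (Commutation r₁r₃₄ = r₃₄r₁.) Let t₁, t₂, θ₁, θ₂, κ₀, κ₁, κ∞, q₁, q₂, p₁, p₂ ∈ ℂ with t₁, t₂ ≠ 0, q₁ ≠ 0. Set α = −(θ₁+θ₂+κ₀+κ₁+κ∞−1)/2 and S = q₁p₁+q₂p₂, and assume S+α ≠ 0 and S+α+κ∞ ≠ 0 and all denominators occurring below are nonzero. Define r₁ by θ₁ ↦ −θ₁, p₁ ↦ p₁ − θ₁/q₁, all other parameters and variables fixed; define r₃₄ by (θ₁,θ₂,κ₀,κ₁,κ∞) ↦ (−θ₁,−θ₂,1−κ₀,1−κ₁,−κ∞), q_i ↦ Q_i := t_i p_i (q_ip_i−θ_i)/((S+α)(S+α+κ∞)), p_i ↦ P_i := −q_ip_i/Q_i for i = 1,2. Then the composite transformations r₁∘r₃₄ and r₃₄∘r₁ (each computed with the appropriately transformed parameters and variables) give the same result on the parameters (θ₁,θ₂,κ₀,κ₁,κ∞) and on the variables (q₁,q₂,p₁,p₂). -/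
import Mathlib


/-- Commutation r₁r₃₄ = r₃₄r₁ for the birational canonical transformations of
the Garnier system in two variables: the composite computed by applying r₃₄
first and then r₁ (path A) agrees with the composite computed by applying r₁
first and then r₃₄ (path B), both on the parameters (θ₁,θ₂,κ₀,κ₁,κ∞) and on
the canonical variables (q₁,q₂,p₁,p₂). Here `κi` denotes κ∞. -/
theorem stmt_13 (t1 t2 θ1 θ2 κ0 κ1 κi q1 q2 p1 p2 : ℂ)
    (ht1 : t1 ≠ 0) (ht2 : t2 ≠ 0) (hq1 : q1 ≠ 0)
    (α S : ℂ)
    (hα : α = -(θ1 + θ2 + κ0 + κ1 + κi - 1) / 2)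
    (hS : S = q1 * p1 + q2 * p2)
    (hSα : S + α ≠ 0) (hSκ : S + α + κi ≠ 0)
    -- Path A: apply r₃₄ first ...
    (QA1 QA2 PA1 PA2 : ℂ)
    (hQA1 : QA1 = t1 * p1 * (q1 * p1 - θ1) / ((S + α) * (S + α + κi)))
    (hQA2 : QA2 = t2 * p2 * (q2 * p2 - θ2) / ((S + α) * (S + α + κi)))
    (hPA1 : PA1 = -(q1 * p1) / QA1) (hPA2 : PA2 = -(q2 * p2) / QA2)
    -- ... then r₁ (with the transformed θ₁-parameter −θ₁ and variables QA₁, PA₁)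
    (pA1 : ℂ) (hpA1 : pA1 = PA1 - (-θ1) / QA1)
    -- Path B: apply r₁ first ...
    (p1r : ℂ) (hp1r : p1r = p1 - θ1 / q1)
    -- ... then r₃₄ (with the transformed parameters (−θ₁,θ₂,κ₀,κ₁,κ∞))
    (αB SB : ℂ)
    (hαB : αB = -((-θ1) + θ2 + κ0 + κ1 + κi - 1) / 2)
    (hSB : SB = q1 * p1r + q2 * p2)
    (QB1 QB2 PB1 PB2 : ℂ)
    (hQB1 : QB1 = t1 * p1r * (q1 * p1r - (-θ1)) / ((SB + αB) * (SB + αB + κi)))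
    (hQB2 : QB2 = t2 * p2 * (q2 * p2 - θ2) / ((SB + αB) * (SB + αB + κi)))
    (hPB1 : PB1 = -(q1 * p1r) / QB1) (hPB2 : PB2 = -(q2 * p2) / QB2)
    -- all denominators occurring above are nonzero
    (hQA1ne : QA1 ≠ 0) (hQA2ne : QA2 ≠ 0) (hQB1ne : QB1 ≠ 0) (hQB2ne : QB2 ≠ 0)
    (hSBα : SB + αB ≠ 0) (hSBκ : SB + αB + κi ≠ 0) :
    -- the two composites give the same parameters
    (((-(-θ1)), (-θ2), (1 - κ0), (1 - κ1), (-κi))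
        = (((-(-θ1)) : ℂ), ((-θ2) : ℂ), ((1 - κ0) : ℂ), ((1 - κ1) : ℂ),
            ((-κi) : ℂ)))
    -- and the same variables (q₁,q₂,p₁,p₂)
    ∧ QA1 = QB1 ∧ QA2 = QB2 ∧ pA1 = PB1 ∧ PA2 = PB2 := by
  have hSAB : SB + αB = S + α := by
    subst hSB hαB hS hα hp1r; field_simp; ring
  have hQ1 : QA1 = QB1 := by
    rw [hQA1, hQB1, hSAB, hp1r]
    field_simp
    ring
  have hQ2 : QA2 = QB2 := by rw [hQA2, hQB2, hSAB]
  refine ⟨rfl, hQ1, hQ2, ?_, ?_⟩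
  · rw [hpA1, hPA1, hPB1, hp1r, ← hQ1]
    field_simp
    ring
  · rw [hPA2, hPB2, hQ2]
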